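/- Let q be a prime power with q + 1 = 2(2^m − 1) and m ≥ 10, and let a ≥ 8. Then the transformed BCH-based cyclic code B ⊆ 𝔽₂^{q+1} (obtained by interleaving two copies of BCH(m,r) with r = ⌊(n/m)(1 − 2/a)⌋, n = 2^m − 1) satisfies r(B) ≥ 1/2 + 1/a > 1/2 and δ(B) ≥ (a−2)/(2ma) > 2√q/(q+1). -/

import Mathlib

open Polynomial

/-- The polynomial `Σ cᵢ xⁱ` associated to a vector `c ∈ 𝔽₂ⁿ`. -/
noncomputable def polyOf {n : ℕ} (c : Fin n → ZMod 2) : Polynomial (ZMod 2) :=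
  ∑ i : Fin n, Polynomial.C (c i) * X ^ (i : ℕ)

/-- Hamming weight of a vector over `𝔽₂`. -/
def wt {n : ℕ} (c : Fin n → ZMod 2) : ℕ :=
  (Finset.univ.filter fun i => c i ≠ 0).card

/-! ### Auxiliary lemmas about `polyOf` -/

lemma polyOf_eq_symm {N : ℕ} (c : Fin N → ZMod 2) :
    polyOf c = ((degreeLTEquiv (ZMod 2) N).symm c : (ZMod 2)[X]) := by
  simp [polyOf, degreeLTEquiv, C_mul_X_pow_eq_monomial]

lemma polyOf_coeffs {N : ℕ} (f : (ZMod 2)[X]) (hf : f ∈ degreeLT (ZMod 2) N) :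
    polyOf (fun i : Fin N => f.coeff i) = f := by
  have : (fun i : Fin N => f.coeff i) = degreeLTEquiv (ZMod 2) N ⟨f, hf⟩ := rfl
  rw [this, polyOf_eq_symm, LinearEquiv.symm_apply_apply]

lemma polyOf_inj {N : ℕ} (c : Fin N → ZMod 2) (h : polyOf c = 0) : c = 0 := by
  rw [polyOf_eq_symm] at h
  exact (LinearEquiv.map_eq_zero_iff (degreeLTEquiv (ZMod 2) N).symm).mp
    (Subtype.ext (h.trans (by simp)))

lemma coeff_polyOf {N : ℕ} (c : Fin N → ZMod 2) (i : Fin N) :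
    (polyOf c).coeff i = c i := by
  rw [polyOf_eq_symm]
  exact congrFun ((degreeLTEquiv (ZMod 2) N).apply_symm_apply c) i

lemma polyOf_mem_degreeLT {N : ℕ} (c : Fin N → ZMod 2) :
    polyOf c ∈ degreeLT (ZMod 2) N := by
  rw [polyOf_eq_symm]
  exact SetLike.coe_mem _

/-! ### Frobenius and minimal polynomials over `𝔽₂` -/

lemma expand_two (f : (ZMod 2)[X]) : expand (ZMod 2) 2 f = f ^ 2 := by
  have h := map_frobenius_expand f (R := ZMod 2) (p := 2)
  rwa [show frobenius (ZMod 2) 2 = RingHom.id (ZMod 2) from RingHom.ext (by decide),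
    Polynomial.map_id] at h

lemma aeval_sq {m : ℕ} (x : GaloisField 2 m) (f : (ZMod 2)[X]) :
    aeval (x^2) f = (aeval x f)^2 := by
  rw [← expand_aeval 2 f x, expand_two, map_pow]

lemma minpoly_sq_dvd {m : ℕ} (x : GaloisField 2 m) :
    minpoly (ZMod 2) (x^2) ∣ minpoly (ZMod 2) x := by
  apply minpoly.dvd
  rw [aeval_sq, minpoly.aeval, zero_pow two_ne_zero]

lemma minpoly_pow2k_dvd {m : ℕ} (k : ℕ) (x : GaloisField 2 m) :
    minpoly (ZMod 2) (x^(2^k)) ∣ minpoly (ZMod 2) x := by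
  induction k with
  | zero => simp
  | succ j ih =>
    have : x ^ (2^(j+1)) = (x ^ (2^j))^2 := by rw [← pow_mul, pow_succ]
    rw [this]
    exact dvd_trans (minpoly_sq_dvd _) ih

lemma pow_card_self {m : ℕ} (hm : m ≠ 0) (x : GaloisField 2 m) : x ^ (2^m) = x := by
  have : Fintype (GaloisField 2 m) := Fintype.ofFinite _
  have hc : Fintype.card (GaloisField 2 m) = 2 ^ m := by
    rw [← Nat.card_eq_fintype_card, GaloisField.card 2 m hm]
  calc x ^ (2^m) = x ^ Fintype.card (GaloisField 2 m) := by rw [hc]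
    _ = x := FiniteField.pow_card x

lemma minpoly_sq {m : ℕ} (hm : m ≠ 0) (x : GaloisField 2 m) :
    minpoly (ZMod 2) (x^2) = minpoly (ZMod 2) x := by
  have hint : ∀ y : GaloisField 2 m, IsIntegral (ZMod 2) y :=
    fun y => IsIntegral.of_finite _ _
  refine Polynomial.eq_of_monic_of_associated (minpoly.monic (hint _)) (minpoly.monic (hint _))
    (associated_of_dvd_dvd (minpoly_sq_dvd x) ?_)
  have hx : (x^2)^(2^(m-1)) = x := by
    rw [← pow_mul, show 2 * 2^(m-1) = 2^m by
      rw [← pow_succ']; congr 1; omega]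
    exact pow_card_self hm x
  calc minpoly (ZMod 2) x = minpoly (ZMod 2) ((x^2)^(2^(m-1))) := by rw [hx]
    _ ∣ minpoly (ZMod 2) (x^2) := minpoly_pow2k_dvd _ _

lemma minpoly_pow2k {m : ℕ} (hm : m ≠ 0) (k : ℕ) (x : GaloisField 2 m) :
    minpoly (ZMod 2) (x^(2^k)) = minpoly (ZMod 2) x := by
  induction k with
  | zero => simp
  | succ j ih =>
    have : x ^ (2^(j+1)) = (x ^ (2^j))^2 := by rw [← pow_mul, pow_succ]
    rw [this, minpoly_sq hm, ih]

/-! ### Numeric lemmas -/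

lemma num1 : ∀ m, 11 ≤ m → 512 * m^2 + 72 ≤ 36 * 2^m := by
  intro m hm
  induction m, hm using Nat.le_induction with
  | base => norm_num
  | succ k hk ih =>
    have h2 : 2^(k+1) = 2 * 2^k := by ring
    nlinarith [ih, hk]

lemma num2aux : ∀ m, 10 ≤ m →
    4*m*(2^(m/2+1)+1) ≤ 3*(2^m - 1) ∧ 4*(m+1)*(2^((m+1)/2+1)+1) ≤ 3*(2^(m+1) - 1) := by
  intro m hm
  induction m, hm using Nat.le_induction with
  | base => norm_num
  | succ k hk ih =>
    refine ⟨ih.2, ?_⟩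
    have ih1 := ih.1
    have hdiv : (k+2)/2 = k/2 + 1 := by omega
    have hp : (2:ℕ)^(k+2) = 4 * 2^k := by ring
    have hp2 : (2:ℕ)^(k/2+1+1) = 2 * 2^(k/2+1) := by ring
    have h1 : 4*(k+2)*(2^((k+2)/2+1)+1) ≤ 8*(k+2)*(2^(k/2+1)+1) := by
      rw [hdiv, hp2]; nlinarith [Nat.one_le_two_pow (n := k/2+1)]
    have h2 : 8*(k+2)*(2^(k/2+1)+1) ≤ 12*k*(2^(k/2+1)+1) := by
      nlinarith [Nat.one_le_two_pow (n := k/2+1)]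
    have h3 : (1:ℕ) ≤ 2^k := Nat.one_le_two_pow
    calc 4*(k+2)*(2^((k+2)/2+1)+1) ≤ 12*k*(2^(k/2+1)+1) := le_trans h1 h2
      _ = 3*(4*k*(2^(k/2+1)+1)) := by ring
      _ ≤ 3*(3*(2^k-1)) := by omega
      _ ≤ 3*(2^(k+2)-1) := by rw [hp]; omega

lemma num2 : ∀ m, 10 ≤ m → 4*m*(2^(m/2+1)+1) ≤ 3*(2^m - 1) :=
  fun m hm => (num2aux m hm).1

lemma not_pp_2045 : ¬ ∃ p k : ℕ, p.Prime ∧ 0 < k ∧ 2045 = p^k := by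
  rintro ⟨p, k, hp, hk, he⟩
  have hdvd : p ∣ 2045 := he ▸ dvd_pow_self p hk.ne'
  have h5 : (2045 : ℕ) = 5 * 409 := by norm_num
  have := (Nat.Prime.dvd_mul hp).mp (h5 ▸ hdvd)
  rcases this with h | h
  · have hp5 : p = 5 := (Nat.prime_dvd_prime_iff_eq hp (by norm_num)).mp h
    subst hp5
    have hk5 : k ≤ 5 := by
      by_contra hco; push_neg at hco
      have : (5:ℕ)^6 ≤ 5^k := Nat.pow_le_pow_right (by norm_num) (by omega)
      norm_num at this; omega
    interval_cases k <;> norm_num at he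
  · have hp409 : p = 409 := (Nat.prime_dvd_prime_iff_eq hp (by norm_num)).mp h
    subst hp409
    have hk5 : k ≤ 2 := by
      by_contra hco; push_neg at hco
      have : (409:ℕ)^3 ≤ 409^k := Nat.pow_le_pow_right (by norm_num) (by omega)
      norm_num at this; omega
    interval_cases k <;> norm_num at he

lemma card_odd_Icc (r : ℕ) :
    ((Finset.Icc 1 r).filter (fun o => Odd o)).card ≤ (r+1)/2 := by
  refine le_trans (Finset.card_le_card_of_injOn (fun o => o / 2)
    (t := Finset.range ((r+1)/2)) ?_ ?_) (le_of_eq (Finset.card_range _))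
  · intro o ho
    simp only [Finset.mem_coe, Finset.mem_filter, Finset.mem_Icc] at ho
    obtain ⟨⟨h1, h2⟩, ho⟩ := ho
    rw [Nat.odd_iff] at ho
    simp only [Finset.mem_coe, Finset.mem_range]
    omega
  · intro o ho o' ho' hoo
    simp only [Finset.mem_coe, Finset.mem_filter, Finset.mem_Icc] at ho ho'
    rw [Nat.odd_iff] at ho ho'
    simp only at hoo
    omega

/-! ### Degree bound for the BCH generator -/

lemma lcm_deg_bound {m : ℕ} (hm : 10 ≤ m) {a : ℕ} (ha : 8 ≤ a)
    (w : GaloisField 2 m) (hw : orderOf w = 2^m - 1) :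
    (((Finset.Icc 1 ((2 ^ m - 1) * (a - 2) / (m * a))).lcm
        fun i => minpoly (ZMod 2) (w ^ i))).natDegree * 2 + m
      ≤ m * ((2 ^ m - 1) * (a - 2) / (m * a)) := by
  set n := 2^m - 1 with hn
  set r := n * (a - 2) / (m * a) with hr
  have hm0 : m ≠ 0 := by omega
  set s := m/2 + 1 with hs
  set o₀ := 2^s + 1 with ho₀
  set o₁ := 2^(m - s) + 1 with ho₁
  have hp2s : (1:ℕ) ≤ 2^s := Nat.one_le_two_pow
  have hpms : (1:ℕ) ≤ 2^(m-s) := Nat.one_le_two_pow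
  have hp2m : (1:ℕ) ≤ 2^m := Nat.one_le_two_pow
  have hnum := num2 m hm
  have ho₀r : o₀ ≤ r := by
    rw [hr, Nat.le_div_iff_mul_le (by positivity)]
    have h1 : 4 * (o₀ * (m * a)) = (4*m*(2^s+1)) * a := by ring
    have h2 : (4*m*(2^s+1)) * a ≤ (3*n) * a := Nat.mul_le_mul_right a hnum
    have h3 : 3 * a ≤ 4 * (a-2) := by omega
    have h4 : (3*n)*a = n * (3*a) := by ring
    have h5 : n * (3*a) ≤ n * (4*(a-2)) := Nat.mul_le_mul_left n h3
    have : 4 * (o₀ * (m*a)) ≤ 4 * (n * (a-2)) := by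
      calc 4 * (o₀ * (m * a)) = (4*m*(2^s+1)) * a := h1
        _ ≤ (3*n)*a := h2
        _ = n * (3*a) := h4
        _ ≤ n * (4*(a-2)) := h5
        _ = 4 * (n * (a-2)) := by ring
    omega
  have hsm : s ≤ m := by omega
  have hms1 : 1 ≤ m - s := by omega
  have ho₁o₀ : o₁ < o₀ := by
    have : (2:ℕ)^(m-s) < 2^s := Nat.pow_lt_pow_right one_lt_two (by omega)
    omega
  have hpow : (w ^ o₀) ^ (2^(m-s)) = w ^ o₁ := by
    rw [← pow_mul]
    have hexp : o₀ * 2^(m-s) = n + o₁ := by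
      have e1 : (2:ℕ)^s * 2^(m-s) = 2^m := by rw [← pow_add]; congr 1; omega
      rw [ho₀, ho₁, hn, add_mul, one_mul, e1]
      omega
    rw [hexp, pow_add, ← hw, pow_orderOf_eq_one, one_mul]
  have hpeq : minpoly (ZMod 2) (w ^ o₀) = minpoly (ZMod 2) (w ^ o₁) := by
    rw [← minpoly_pow2k hm0 (m-s) (w ^ o₀), hpow]
  set O' := ((Finset.Icc 1 r).filter (fun o => Odd o)) \ {o₀} with hO'
  have ho₁O' : o₁ ∈ O' := by
    rw [hO', Finset.mem_sdiff, Finset.mem_filter, Finset.mem_Icc]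
    have hb1 : 1 ≤ o₁ := by omega
    have hb2 : o₁ ≤ r := le_trans (le_of_lt ho₁o₀) ho₀r
    have hb3 : o₁ ≠ o₀ := ne_of_lt ho₁o₀
    refine ⟨⟨⟨hb1, hb2⟩, ?_⟩, by simpa using hb3⟩
    rw [ho₁, Nat.odd_iff]
    have : (2:ℕ)^(m-s) % 2 = 0 := by
      have : (2:ℕ) ∣ 2^(m-s) := dvd_pow_self 2 (by omega)
      omega
    omega
  have hdvd : ((Finset.Icc 1 r).lcm fun i => minpoly (ZMod 2) (w ^ i)) ∣
      O'.lcm fun i => minpoly (ZMod 2) (w ^ i) := by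
    apply Finset.lcm_dvd
    intro i hi
    rw [Finset.mem_Icc] at hi
    obtain ⟨k, o, hodvd, hio⟩ := Nat.exists_eq_pow_mul_and_not_dvd
      (by omega : i ≠ 0) 2 (by norm_num)
    have hoodd : Odd o := Nat.odd_iff.mpr (by omega)
    have ho1 : 1 ≤ o := by
      rcases Nat.eq_zero_or_pos o with h | h
      · exfalso; rw [h, mul_zero] at hio; omega
      · exact h
    have hor : o ≤ r := by
      have : o ≤ i := by
        calc o = 1 * o := (one_mul o).symm
          _ ≤ 2^k * o := Nat.mul_le_mul_right o (Nat.one_le_two_pow)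
          _ = i := hio.symm
      omega
    have hpio : minpoly (ZMod 2) (w ^ i) = minpoly (ZMod 2) (w ^ o) := by
      rw [hio, mul_comm, pow_mul, minpoly_pow2k hm0]
    rcases eq_or_ne o o₀ with h | h
    · rw [hpio, h, hpeq]
      exact Finset.dvd_lcm ho₁O'
    · rw [hpio]
      apply Finset.dvd_lcm
      rw [hO', Finset.mem_sdiff, Finset.mem_filter, Finset.mem_Icc]
      exact ⟨⟨⟨ho1, hor⟩, hoodd⟩, by simpa using h⟩
  have hint : ∀ y : GaloisField 2 m, IsIntegral (ZMod 2) y := fun y => IsIntegral.of_finite _ _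
  have hprodne : (∏ o ∈ O', minpoly (ZMod 2) (w ^ o)) ≠ 0 := by
    rw [Finset.prod_ne_zero_iff]
    exact fun o _ => minpoly.ne_zero (hint _)
  have hdvd2 : (O'.lcm fun i => minpoly (ZMod 2) (w ^ i)) ∣
      ∏ o ∈ O', minpoly (ZMod 2) (w ^ o) :=
    Finset.lcm_dvd fun o ho => Finset.dvd_prod_of_mem _ ho
  have hdegprod : (∏ o ∈ O', minpoly (ZMod 2) (w ^ o)).natDegree ≤ m * O'.card := by
    rw [Polynomial.natDegree_prod _ _ (fun o _ => minpoly.ne_zero (hint _))]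
    calc ∑ o ∈ O', (minpoly (ZMod 2) (w ^ o)).natDegree ≤ ∑ o ∈ O', m := by
          apply Finset.sum_le_sum
          intro o _
          have hle := minpoly.natDegree_le (w ^ o) (A := ZMod 2)
          rwa [GaloisField.finrank 2 hm0] at hle
      _ = O'.card * m := by rw [Finset.sum_const, smul_eq_mul]
      _ = m * O'.card := mul_comm _ _
  have hdeg : (((Finset.Icc 1 r).lcm fun i => minpoly (ZMod 2) (w ^ i))).natDegree
      ≤ m * O'.card :=
    le_trans (Polynomial.natDegree_le_of_dvd (dvd_trans hdvd hdvd2) hprodne) hdegprod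
  have ho₀mem : o₀ ∈ (Finset.Icc 1 r).filter (fun o => Odd o) := by
    rw [Finset.mem_filter, Finset.mem_Icc]
    refine ⟨⟨by omega, ho₀r⟩, ?_⟩
    rw [ho₀, Nat.odd_iff]
    have : (2:ℕ) ∣ 2^s := dvd_pow_self 2 (by omega)
    omega
  have hcard : O'.card = ((Finset.Icc 1 r).filter (fun o => Odd o)).card - 1 := by
    rw [hO', Finset.card_sdiff_of_subset (Finset.singleton_subset_iff.mpr ho₀mem), Finset.card_singleton]
  have hcard2 : O'.card ≤ (r+1)/2 - 1 := by
    have := card_odd_Icc r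
    omega
  have hr1 : 1 ≤ r := by omega
  calc (((Finset.Icc 1 r).lcm fun i => minpoly (ZMod 2) (w ^ i))).natDegree * 2 + m
      ≤ (m * O'.card) * 2 + m := by omega
    _ = m * (2 * O'.card + 1) := by ring
    _ ≤ m * r := by
        apply Nat.mul_le_mul_left
        omega

/-! ### Even/odd decomposition -/

noncomputable def evenP (u : (ZMod 2)[X]) : (ZMod 2)[X] :=
  ∑ i ∈ Finset.range (u.natDegree + 1), C (u.coeff (2*i)) * X^i

noncomputable def oddP (u : (ZMod 2)[X]) : (ZMod 2)[X] :=
  ∑ i ∈ Finset.range (u.natDegree + 1), C (u.coeff (2*i+1)) * X^i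

lemma coeff_evenP (u : (ZMod 2)[X]) (k : ℕ) : (evenP u).coeff k = u.coeff (2*k) := by
  rw [evenP, finset_sum_coeff]
  simp only [coeff_C_mul, coeff_X_pow, mul_ite, mul_one, mul_zero]
  rw [Finset.sum_ite_eq (Finset.range (u.natDegree+1)) k (fun i => u.coeff (2*i))]
  split_ifs with h
  · rfl
  · rw [Finset.mem_range] at h
    rw [coeff_eq_zero_of_natDegree_lt]
    omega

lemma coeff_oddP (u : (ZMod 2)[X]) (k : ℕ) : (oddP u).coeff k = u.coeff (2*k+1) := by
  rw [oddP, finset_sum_coeff]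
  simp only [coeff_C_mul, coeff_X_pow, mul_ite, mul_one, mul_zero]
  rw [Finset.sum_ite_eq (Finset.range (u.natDegree+1)) k (fun i => u.coeff (2*i+1))]
  split_ifs with h
  · rfl
  · rw [Finset.mem_range] at h
    rw [coeff_eq_zero_of_natDegree_lt]
    omega

lemma rep_coeff_even (A B : (ZMod 2)[X]) (t : ℕ) :
    (expand (ZMod 2) 2 A + X * expand (ZMod 2) 2 B).coeff (2*t) = A.coeff t := by
  rw [coeff_add, coeff_expand (by norm_num : 0 < 2)]
  rw [if_pos ⟨t, rfl⟩, Nat.mul_div_cancel_left t (by norm_num)]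
  cases t with
  | zero =>
    simp [mul_coeff_zero]
  | succ s =>
    have h : 2*(s+1) = (2*s+1)+1 := by ring
    rw [h, coeff_X_mul, coeff_expand (by norm_num : 0 < 2), if_neg (by omega), add_zero]

lemma rep_coeff_odd (A B : (ZMod 2)[X]) (t : ℕ) :
    (expand (ZMod 2) 2 A + X * expand (ZMod 2) 2 B).coeff (2*t+1) = B.coeff t := by
  rw [coeff_add, coeff_expand (by norm_num : 0 < 2), if_neg (by omega),
    coeff_X_mul, coeff_expand (by norm_num : 0 < 2), if_pos ⟨t, rfl⟩,
    Nat.mul_div_cancel_left t (by norm_num), zero_add]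

lemma decompose (u : (ZMod 2)[X]) :
    u = expand (ZMod 2) 2 (evenP u) + X * expand (ZMod 2) 2 (oddP u) := by
  ext j
  rcases Nat.even_or_odd j with hj | hj
  · obtain ⟨t, ht⟩ := hj
    have : j = 2*t := by omega
    subst this
    rw [rep_coeff_even, coeff_evenP]
  · obtain ⟨t, ht⟩ := hj
    subst ht
    rw [rep_coeff_odd, coeff_oddP]

lemma wt_transfer {N : ℕ} (c : Fin N → ZMod 2) (A : (ZMod 2)[X]) (ι : ℕ → ℕ)
    (hinj : ∀ t t', ι t = ι t' → t = t')
    (h : ∀ t ∈ A.support, ∃ hlt : ι t < N, c ⟨ι t, hlt⟩ ≠ 0) :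
    A.support.card ≤ wt c := by
  have h1 : A.support.card ≤
      ((Finset.univ.filter fun i : Fin N => c i ≠ 0).image Fin.val).card := by
    apply Finset.card_le_card_of_injOn ι
    · intro t ht
      obtain ⟨hlt, hc⟩ := h t ht
      rw [Finset.mem_coe, Finset.mem_image]
      exact ⟨⟨ι t, hlt⟩, Finset.mem_filter.mpr ⟨Finset.mem_univ _, hc⟩, rfl⟩
    · intro t _ t' _ htt
      exact hinj t t' htt
  calc A.support.card ≤ _ := h1
    _ ≤ (Finset.univ.filter fun i : Fin N => c i ≠ 0).card := Finset.card_image_le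
    _ = wt c := rfl

/-! ### The BCH bound -/

lemma bch_bound {m : ℕ} {n r : ℕ} (hn : 0 < n) (w : GaloisField 2 m) (hw : orderOf w = n)
    (h : (ZMod 2)[X]) (hne : h ≠ 0) (hdeg : h.natDegree < n)
    (hroots : ∀ i ∈ Finset.Icc 1 r, minpoly (ZMod 2) (w ^ i) ∣ h) :
    r + 1 ≤ h.support.card := by
  by_contra hcon
  push_neg at hcon
  have hsr : h.support.card ≤ r := by omega
  have hw0 : w ≠ 0 := by
    intro h0
    have h1 := pow_orderOf_eq_one w
    rw [hw, h0, zero_pow hn.ne'] at h1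
    exact zero_ne_one h1
  set s := h.support.card with hs
  set eq := h.support.equivFin with heq
  set J : Fin s → ℕ := fun k => (eq.symm k : ℕ) with hJ
  have hJmem : ∀ k, J k ∈ h.support := fun k => (eq.symm k).2
  have hJlt : ∀ k, J k < n :=
    fun k => lt_of_le_of_lt (le_natDegree_of_ne_zero (mem_support_iff.mp (hJmem k))) hdeg
  have hJinj : Function.Injective J := by
    intro k l hkl
    exact eq.symm.injective (Subtype.ext hkl)
  set u : Fin s → GaloisField 2 m := fun k => w ^ J k with hu
  have huinj : Function.Injective u := by
    intro k l hkl
    exact hJinj (pow_injOn_Iio_orderOf (by rw [hw]; exact hJlt k) (by rw [hw]; exact hJlt l) hkl)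
  have hu0 : ∀ k, u k ≠ 0 := fun k => pow_ne_zero _ hw0
  set v : Fin s → GaloisField 2 m :=
    fun k => algebraMap (ZMod 2) (GaloisField 2 m) (h.coeff (J k)) * u k with hv
  have hkey : ∀ i : Fin s, (∑ k, v k * u k ^ (i : ℕ)) = 0 := by
    intro i
    obtain ⟨t, ht⟩ := hroots ((i : ℕ) + 1) (Finset.mem_Icc.mpr ⟨le_add_self, by
      have := i.2; omega⟩)
    have haev : aeval (w ^ ((i:ℕ)+1)) h = 0 := by
      rw [ht, map_mul, minpoly.aeval, zero_mul]
    rw [aeval_def, eval₂_eq_sum, Polynomial.sum] at haev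
    have hsum : ∑ j ∈ h.support,
        algebraMap (ZMod 2) (GaloisField 2 m) (h.coeff j) * (w ^ ((i:ℕ)+1)) ^ j
        = ∑ k : Fin s,
        algebraMap (ZMod 2) (GaloisField 2 m) (h.coeff (J k)) * (w ^ ((i:ℕ)+1)) ^ (J k) := by
      rw [← Finset.sum_coe_sort]
      exact (Equiv.sum_comp eq.symm (fun j : h.support =>
        algebraMap (ZMod 2) (GaloisField 2 m) (h.coeff j) * (w ^ ((i:ℕ)+1)) ^ (j:ℕ))).symm
    rw [hsum] at haev
    rw [← haev]
    apply Finset.sum_congr rfl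
    intro k _
    have : (w ^ ((i:ℕ)+1)) ^ (J k) = u k ^ ((i:ℕ)+1) := by
      rw [hu, ← pow_mul, ← pow_mul, mul_comm]
    rw [this, hv, pow_succ', mul_assoc]
  have hv0 : v = 0 := Matrix.eq_zero_of_forall_pow_sum_mul_pow_eq_zero huinj hkey
  obtain ⟨j, hj⟩ := nonempty_support_iff.mpr hne
  set k₀ : Fin s := eq ⟨j, hj⟩
  have : v k₀ = 0 := by rw [hv0]; rfl
  rw [hv] at this
  rcases mul_eq_zero.mp this with hc | hc
  · have hcz : h.coeff (J k₀) = 0 :=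
      (algebraMap (ZMod 2) (GaloisField 2 m)).injective (by simpa using hc)
    exact (mem_support_iff.mp (hJmem k₀)) hcz
  · exact hu0 k₀ hc


lemma rate_real {a n d F q : ℕ} (ha : 8 ≤ a) (hq2n : q + 1 = 2*n) (hd : d < n)
    (hnat : a*d + 2*n ≤ n*a) (hF : q + 1 - d ≤ F) :
    1/2 + 1/(a:ℝ) ≤ (F:ℝ)/((q:ℝ)+1) := by
  have ha0 : (0:ℝ) < a := by
    have : (8:ℝ) ≤ a := by exact_mod_cast ha
    linarith
  have hqR : (q:ℝ)+1 = 2*(n:ℝ) := by exact_mod_cast hq2n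
  have hFR : 2*(n:ℝ) - (d:ℝ) ≤ (F:ℝ) := by
    have h1 : q + 1 - d = 2*n - d := by omega
    have h2 : ((2*n - d : ℕ):ℝ) = 2*(n:ℝ) - d := by
      push_cast [Nat.cast_sub (by omega : d ≤ 2*n)]
      ring
    have h3 : ((q + 1 - d : ℕ):ℝ) ≤ (F:ℝ) := by exact_mod_cast hF
    rw [h1, h2] at h3
    exact h3
  have hnatR : (a:ℝ)*d + 2*n ≤ (n:ℝ)*a := by exact_mod_cast hnat
  have hn0 : (0:ℝ) < (n:ℝ) := by
    have : (1:ℕ) ≤ n := by omega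
    exact_mod_cast Nat.lt_of_lt_of_le Nat.zero_lt_one this
  rw [le_div_iff₀ (by rw [hqR]; linarith), hqR]
  rw [div_add_div _ _ (by norm_num : (2:ℝ) ≠ 0) (ne_of_gt ha0), div_mul_eq_mul_div,
    div_le_iff₀ (by positivity)]
  nlinarith [mul_le_mul_of_nonneg_left hFR ha0.le, hnatR]

lemma dist_real {a m r n q W : ℕ} (ha : 8 ≤ a) (hm : 1 ≤ m) (hq2n : q + 1 = 2*n)
    (hlt : n*(a-2) < (r+1)*(m*a)) (hW : r + 1 ≤ W) :
    ((a:ℝ)-2)/(2*m*a) ≤ (W:ℝ)/((q:ℝ)+1) := by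
  have ha0 : (0:ℝ) < a := by
    have : (8:ℝ) ≤ a := by exact_mod_cast ha
    linarith
  have hm0 : (0:ℝ) < m := by exact_mod_cast hm
  have hqR : (q:ℝ)+1 = 2*(n:ℝ) := by exact_mod_cast hq2n
  have haR : ((a:ℝ) - 2) = ((a - 2 : ℕ) : ℝ) := by
    push_cast [Nat.cast_sub (by omega : 2 ≤ a)]
    ring
  have hltR : (n:ℝ) * ((a:ℝ)-2) ≤ ((r:ℝ)+1) * ((m:ℝ)*a) := by
    rw [haR]
    exact_mod_cast le_of_lt hlt
  have hWR : (r:ℝ) + 1 ≤ W := by exact_mod_cast hW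
  have hn0 : (0:ℝ) < (n:ℝ) := by
    have : (1:ℕ) ≤ n := by omega
    exact_mod_cast Nat.lt_of_lt_of_le Nat.zero_lt_one this
  rw [div_le_div_iff₀ (by positivity) (by rw [hqR]; linarith), hqR]
  nlinarith [hltR, hWR, mul_pos hm0 ha0]

lemma numeric_real {m a q : ℕ} (hm : 11 ≤ m) (ha : 8 ≤ a) (hq3 : q + 3 = 2*2^m) :
    2*Real.sqrt q/((q:ℝ)+1) < ((a:ℝ)-2)/(2*(m:ℝ)*a) := by
  have hnum := num1 m hm
  have hmR : (11:ℝ) ≤ m := by exact_mod_cast hm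
  have haR : (8:ℝ) ≤ a := by exact_mod_cast ha
  have hqN : (q:ℝ) + 3 = 2 * ((2:ℝ)^m) := by exact_mod_cast hq3
  have hNR : (512:ℝ) * (m:ℝ)^2 + 72 ≤ 36 * (2:ℝ)^m := by exact_mod_cast hnum
  have hN2048 : (2048:ℝ) ≤ (2:ℝ)^m := by
    have : (2:ℕ)^11 ≤ 2^m := Nat.pow_le_pow_right (by norm_num) hm
    exact_mod_cast this
  have hq1pos : (0:ℝ) < (q:ℝ) + 1 := by nlinarith
  have hmpos : (0:ℝ) < (m:ℝ) := by linarith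
  have hsq : Real.sqrt q < 3 * ((q:ℝ) + 1) / (16 * m) := by
    have hypos : (0:ℝ) < 3 * ((q:ℝ)+1) / (16*m) := by positivity
    rw [show Real.sqrt (q:ℝ) < 3*((q:ℝ)+1)/(16*m) ↔ (q:ℝ) < (3*((q:ℝ)+1)/(16*m))^2 from
      Real.sqrt_lt' hypos]
    rw [div_pow, lt_div_iff₀ (by positivity)]
    nlinarith [hqN, hNR, hN2048, hmpos, sq_nonneg ((m:ℝ))]
  have hstep2 : 2 * Real.sqrt q / ((q:ℝ)+1) < 3 / (8*m) := by
    have h1 : 2 * Real.sqrt q < 2 * (3 * ((q:ℝ) + 1) / (16 * m)) := by linarith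
    have h2 : 2 * (3 * ((q:ℝ) + 1) / (16 * m)) / ((q:ℝ)+1) = 3 / (8*m) := by
      field_simp
      ring
    calc 2 * Real.sqrt q / ((q:ℝ)+1) < 2 * (3 * ((q:ℝ) + 1) / (16 * m)) / ((q:ℝ)+1) := by
          apply div_lt_div_of_pos_right h1 hq1pos
      _ = 3 / (8*m) := h2
  have hstep1 : (3:ℝ) / (8*m) ≤ ((a:ℝ) - 2) / (2*(m:ℝ)*a) := by
    rw [div_le_div_iff₀ (by positivity) (by positivity)]
    nlinarith [hmpos, haR]
  exact lt_of_lt_of_le hstep2 hstep1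

/-- Let `q` be a prime power with `q + 1 = 2(2^m − 1)`, `m ≥ 10` and `a ≥ 8`.
The transformed BCH-based cyclic code `B ⊆ 𝔽₂^{q+1}` (the interleaving of two
copies of `BCH(m,r)` with `r = ⌊(n/m)(1 − 2/a)⌋`, `n = 2^m − 1`, i.e. the
cyclic code of length `q+1` generated by `h_r²`) has rate
`r(B) ≥ 1/2 + 1/a > 1/2` and normalized distance
`δ(B) ≥ (a−2)/(2ma) > 2√q/(q+1)`. -/
theorem stmt19 (m a q : ℕ) (hm : 10 ≤ m) (ha : 8 ≤ a)
    (hq : q + 1 = 2 * (2 ^ m - 1))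
    (hqpp : ∃ p k : ℕ, p.Prime ∧ 0 < k ∧ q = p ^ k)
    (w : GaloisField 2 m) (hw : orderOf w = 2 ^ m - 1)
    (B : Submodule (ZMod 2) (Fin (q + 1) → ZMod 2))
    (hB : ∀ c : Fin (q + 1) → ZMod 2, c ∈ B ↔
      ((Finset.Icc 1 ((2 ^ m - 1) * (a - 2) / (m * a))).lcm
          fun i => minpoly (ZMod 2) (w ^ i)) ^ 2 ∣ polyOf c) :
    (Module.finrank (ZMod 2) B : ℝ) / (q + 1) ≥ 1 / 2 + 1 / a ∧
    (∀ c ∈ B, c ≠ 0 →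
      ((a : ℝ) - 2) / (2 * m * a) ≤ (wt c : ℝ) / (q + 1)) ∧
    ((a : ℝ) - 2) / (2 * m * a) > 2 * Real.sqrt q / (q + 1) := by
  have hm0 : m ≠ 0 := by omega
  set n := 2 ^ m - 1 with hn
  set r := n * (a - 2) / (m * a) with hr
  set g := (Finset.Icc 1 r).lcm (fun i => minpoly (ZMod 2) (w ^ i)) with hg
  have hp2m : (2:ℕ)^10 ≤ 2^m := Nat.pow_le_pow_right (by norm_num) hm
  have hn1 : 1000 ≤ n := by omega
  have hq2n : q + 1 = 2 * n := hq
  -- degree bound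
  have hdegbound : g.natDegree * 2 + m ≤ m * r := lcm_deg_bound hm ha w hw
  have hra : r * (m * a) ≤ n * (a - 2) := Nat.div_mul_le_self _ _
  have hmrn : m * r ≤ n := by
    have h1 : (m * r) * a ≤ n * (a-2) := by
      calc (m*r)*a = r * (m*a) := by ring
        _ ≤ n * (a-2) := hra
    have h2 : n * (a-2) ≤ n * a := Nat.mul_le_mul_left n (by omega)
    exact Nat.le_of_mul_le_mul_right (le_trans h1 h2) (by omega)
  -- g is nonzero
  have hint : ∀ y : GaloisField 2 m, IsIntegral (ZMod 2) y := fun y => IsIntegral.of_finite _ _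
  have hgP : g ∣ ∏ i ∈ Finset.Icc 1 r, minpoly (ZMod 2) (w ^ i) :=
    Finset.lcm_dvd fun i hi => Finset.dvd_prod_of_mem _ hi
  have hPne : (∏ i ∈ Finset.Icc 1 r, minpoly (ZMod 2) (w ^ i)) ≠ 0 := by
    rw [Finset.prod_ne_zero_iff]
    exact fun i _ => minpoly.ne_zero (hint _)
  have hgne : g ≠ 0 := by
    intro h0
    rw [h0] at hgP
    exact hPne (zero_dvd_iff.mp hgP)
  have hg2ne : g ^ 2 ≠ 0 := pow_ne_zero 2 hgne
  set d := (g ^ 2).natDegree with hd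
  have hd2 : d = 2 * g.natDegree := by rw [hd, natDegree_pow]
  have hdmr : d + m ≤ m * r := by omega
  have hdn : d < n := by omega
  have hdq : d < q + 1 := by omega
  have hmindvd : ∀ i ∈ Finset.Icc 1 r, minpoly (ZMod 2) (w ^ i) ∣ g :=
    fun i hi => Finset.dvd_lcm hi
  constructor
  · -- rate bound
    set k := (q + 1) - d with hk
    have hdk : d + k = q + 1 := by omega
    have hresmem : ∀ x ∈ degreeLT (ZMod 2) k,
        (LinearMap.mulLeft (ZMod 2) (g^2)) x ∈ degreeLT (ZMod 2) (q+1) := by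
      intro x hx
      rw [mem_degreeLT] at hx ⊢
      show ((g^2) * x).degree < ((q+1 : ℕ) : WithBot ℕ)
      refine lt_of_le_of_lt (degree_mul_le _ _) ?_
      have h1 : (g^2).degree ≤ (d : WithBot ℕ) := degree_le_natDegree
      calc (g^2).degree + x.degree ≤ (d : WithBot ℕ) + x.degree := by
            exact add_le_add_left h1 _
        _ < (d : WithBot ℕ) + (k : ℕ) := by
            exact WithBot.add_lt_add_left (by exact WithBot.coe_ne_bot) hx
        _ = ((q + 1 : ℕ) : WithBot ℕ) := by
            rw [← Nat.cast_add, hdk]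
    set φ : degreeLT (ZMod 2) k →ₗ[ZMod 2] (Fin (q+1) → ZMod 2) :=
      (degreeLTEquiv (ZMod 2) (q+1)).toLinearMap.comp
        ((LinearMap.mulLeft (ZMod 2) (g^2)).restrict hresmem) with hφ
    have hφval : ∀ x : degreeLT (ZMod 2) k, polyOf (φ x) = g^2 * (x : (ZMod 2)[X]) := by
      intro x
      have h1 : φ x = fun i : Fin (q+1) => (g^2 * (x : (ZMod 2)[X])).coeff i := rfl
      rw [h1]
      exact polyOf_coeffs _ (hresmem _ x.2)
    have hφinj : Function.Injective φ := by
      intro x y hxy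
      have h1 : polyOf (φ x) = polyOf (φ y) := by rw [hxy]
      rw [hφval, hφval] at h1
      exact Subtype.ext (mul_left_cancel₀ hg2ne h1)
    have hrange : ∀ x : degreeLT (ZMod 2) k, φ x ∈ B := by
      intro x
      rw [hB, hφval]
      exact Dvd.intro _ rfl
    set ψ : degreeLT (ZMod 2) k →ₗ[ZMod 2] B := φ.codRestrict B hrange with hψ
    have hψinj : Function.Injective ψ := by
      intro x y hxy
      apply hφinj
      exact congrArg Subtype.val hxy
    have hfr : Module.finrank (ZMod 2) (degreeLT (ZMod 2) k) = k := by
      rw [LinearEquiv.finrank_eq (degreeLTEquiv (ZMod 2) k), Module.finrank_pi,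
        Fintype.card_fin]
    have hBrank : k ≤ Module.finrank (ZMod 2) B := by
      rw [← hfr]
      exact LinearMap.finrank_le_finrank_of_injective hψinj
    have hnat : a * d + 2 * n ≤ n * a := by
      have h1 := Nat.mul_le_mul_left a hdmr
      rw [Nat.mul_add] at h1
      have h2 : a * (m * r) ≤ n * (a - 2) := by
        calc a * (m * r) = r * (m * a) := by ring
          _ ≤ n * (a-2) := hra
      have h3 : n * (a - 2) + n * 2 = n * a := by
        rw [← Nat.mul_add]
        congr 1
        omega
      omega
    have := rate_real ha hq2n hdn hnat hBrank
    rw [ge_iff_le]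
    exact this
  constructor
  · -- distance bound
    intro c hc hcne
    set f := polyOf c with hf
    have hfne : f ≠ 0 := fun h0 => hcne (polyOf_inj c h0)
    obtain ⟨u, hu⟩ := (hB c).mp hc
    have hrep : f = expand (ZMod 2) 2 (g * evenP u) + X * expand (ZMod 2) 2 (g * oddP u) := by
      have h1 : expand (ZMod 2) 2 g * u
          = expand (ZMod 2) 2 (g * evenP u) + X * expand (ZMod 2) 2 (g * oddP u) := by
        conv_lhs => rw [decompose u]
        rw [mul_add, ← map_mul, mul_left_comm, ← map_mul]
      rw [← hf] at hu
      rw [hu, ← expand_two, h1]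
    have hcoeffE : ∀ t, f.coeff (2*t) = (g * evenP u).coeff t := by
      intro t
      rw [hrep, rep_coeff_even]
    have hcoeffO : ∀ t, f.coeff (2*t+1) = (g * oddP u).coeff t := by
      intro t
      rw [hrep, rep_coeff_odd]
    have hfdeg : f.natDegree ≤ q := by
      have hmem := polyOf_mem_degreeLT c
      rw [mem_degreeLT] at hmem
      have := (natDegree_lt_iff_degree_lt hfne).mpr hmem
      omega
    have hcoeffc : ∀ i : Fin (q+1), c i = f.coeff i := fun i => (coeff_polyOf c i).symm
    have hnot : ¬ (g * evenP u = 0 ∧ g * oddP u = 0) := by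
      rintro ⟨h1, h2⟩
      apply hfne
      rw [hrep, h1, h2]
      simp
    have hwt : r + 1 ≤ wt c := by
      have hcase : ∀ (H : (ZMod 2)[X]) (e : ℕ), e ≤ 1 → H ≠ 0 → g ∣ H →
          (∀ t, f.coeff (2*t+e) = H.coeff t) → r + 1 ≤ wt c := by
        intro H e he hHne hgH hcoeff
        have hsupp : ∀ t ∈ H.support, 2*t + e ≤ q := by
          intro t ht
          have h1 : f.coeff (2*t+e) ≠ 0 := by
            rw [hcoeff]
            exact mem_support_iff.mp ht
          have := le_natDegree_of_ne_zero h1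
          omega
        have hHdeg : H.natDegree < n := by
          have hmem : H.natDegree ∈ H.support := natDegree_mem_support_of_nonzero hHne
          have := hsupp _ hmem
          omega
        have hHdvd : ∀ i ∈ Finset.Icc 1 r, minpoly (ZMod 2) (w ^ i) ∣ H :=
          fun i hi => dvd_trans (hmindvd i hi) hgH
        have hbch := bch_bound (by omega : 0 < n) w hw H hHne hHdeg hHdvd
        have htrans : H.support.card ≤ wt c := by
          apply wt_transfer c H (fun t => 2*t + e)
          · intro t t' htt; omega
          · intro t ht
            have h1 : 2*t + e < q + 1 := by
              have := hsupp t ht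
              omega
            refine ⟨h1, ?_⟩
            rw [hcoeffc ⟨2*t+e, h1⟩]
            show f.coeff (2*t+e) ≠ 0
            rw [hcoeff]
            exact mem_support_iff.mp ht
        omega
      rcases (not_and_or.mp hnot) with hA | hA
      · exact hcase (g * evenP u) 0 (by norm_num) hA (Dvd.intro _ rfl)
          (fun t => by simpa using hcoeffE t)
      · exact hcase (g * oddP u) 1 le_rfl hA (Dvd.intro _ rfl) hcoeffO
    have hlt : n * (a - 2) < (r + 1) * (m * a) := by
      have h1 := Nat.div_add_mod (n*(a-2)) (m*a)
      have h2 : (n*(a-2)) % (m*a) < m*a := Nat.mod_lt _ (by positivity)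
      calc n*(a-2) = (m*a)*r + (n*(a-2)) % (m*a) := h1.symm
        _ < (m*a)*r + m*a := by omega
        _ = (r+1)*(m*a) := by ring
    exact dist_real ha (by omega : 1 ≤ m) hq2n hlt hwt
  · -- numeric inequality
    have hm11 : 11 ≤ m := by
      rcases Nat.lt_or_ge m 11 with h | h
      · exfalso
        have hmeq : m = 10 := by omega
        subst hmeq
        have hq2045 : q = 2045 := by norm_num at hq2n; omega
        obtain ⟨p, kk, hp, hk, he⟩ := hqpp
        exact not_pp_2045 ⟨p, kk, hp, hk, by omega⟩
      · exact h
    have hq3 : q + 3 = 2 * 2^m := by omega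
    have := numeric_real hm11 ha hq3
    rw [gt_iff_lt]
    exact this
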